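/- Let A and B be finite nonempty sets, and let p and q be probability distributions on A × B whose marginal distributions on B are strictly positive at every b ∈ B. Let S = {(a,b) ∈ A × B : p(a|b) > 2·q(a|b)}. Then p(S) ≤ 2·Σ_{(a,b) ∈ A×B} |p(a,b) − q(a,b)|. -/

import Mathlib

open Finset

/-- **Reverse Pinsker (set form).** For probability distributions `p`, `q` on `A × B`
with strictly positive marginals on `B`, the `p`-probability of the set
`S = {(a,b) : p(a|b) > 2 q(a|b)}` is at most twice the ℓ1-distance between `p` and `q`. -/
theorem reverse_pinsker_set {A B : Type*} [Fintype A] [Fintype B] [Nonempty A] [Nonempty B]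
    [DecidableEq A] [DecidableEq B]
    (p q : A × B → ℝ)
    (hp0 : ∀ x, 0 ≤ p x) (hq0 : ∀ x, 0 ≤ q x)
    (hp1 : ∑ x, p x = 1) (hq1 : ∑ x, q x = 1)
    (hpB : ∀ b : B, 0 < ∑ a, p (a, b)) (hqB : ∀ b : B, 0 < ∑ a, q (a, b)) :
    ∑ x ∈ Finset.univ.filter
        (fun x : A × B => p x / (∑ a, p (a, x.2)) > 2 * (q x / (∑ a, q (a, x.2)))), p x
      ≤ 2 * ∑ x, |p x - q x| := by
  set L := ∑ x, |p x - q x| with hL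
  set pB := fun b : B => ∑ a, p (a, b) with hpBdef
  set qB := fun b : B => ∑ a, q (a, b) with hqBdef
  set g := fun b : B => max (qB b - pB b) 0 with hg
  have hsplit : ∀ f : A × B → ℝ, ∑ x : A × B, f x = ∑ b, ∑ a, f (a, b) := by
    intro f
    rw [← Fintype.sum_prod_type_right]
  -- total sums equal
  have hdiff0 : ∑ x, (p x - q x) = 0 := by
    rw [Finset.sum_sub_distrib, hp1, hq1]; ring
  -- positive part sum
  have hA : ∑ x, max (p x - q x) 0 = L / 2 := by
    have h2 : ∀ x : A × B, 2 * max (p x - q x) 0 = |p x - q x| + (p x - q x) := by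
      intro x
      rcases le_total (p x - q x) 0 with h | h
      · rw [max_eq_right h, abs_of_nonpos h]; ring
      · rw [max_eq_left h, abs_of_nonneg h]; ring
    have : 2 * ∑ x, max (p x - q x) 0 = L := by
      rw [Finset.mul_sum]
      simp_rw [h2]
      rw [Finset.sum_add_distrib, hdiff0, ← hL]; ring
    linarith
  -- marginal positive part sum
  have hBdiff0 : ∑ b, (qB b - pB b) = 0 := by
    have : ∑ b, (qB b - pB b) = ∑ x, (q x - p x) := by
      rw [hsplit (fun x => q x - p x)]
      simp [hqBdef, hpBdef, Finset.sum_sub_distrib]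
    rw [this, Finset.sum_sub_distrib, hp1, hq1]; ring
  have hBabs : ∑ b, |qB b - pB b| ≤ L := by
    have : ∀ b, |qB b - pB b| ≤ ∑ a, |q (a, b) - p (a, b)| := by
      intro b
      calc |qB b - pB b| = |∑ a, (q (a, b) - p (a, b))| := by
            rw [hqBdef, hpBdef]; simp [Finset.sum_sub_distrib]
        _ ≤ ∑ a, |q (a, b) - p (a, b)| := Finset.abs_sum_le_sum_abs _ _
    calc ∑ b, |qB b - pB b| ≤ ∑ b, ∑ a, |q (a, b) - p (a, b)| :=
          Finset.sum_le_sum fun b _ => this b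
      _ = ∑ x : A × B, |q x - p x| := (hsplit fun x => |q x - p x|).symm
      _ = L := by rw [hL]; exact Finset.sum_congr rfl fun x _ => abs_sub_comm _ _
  have hB : ∑ b, g b ≤ L / 2 := by
    have h2 : ∀ b, 2 * g b = |qB b - pB b| + (qB b - pB b) := by
      intro b
      rcases le_total (qB b - pB b) 0 with h | h
      · rw [hg]; simp only; rw [max_eq_right h, abs_of_nonpos h]; ring
      · rw [hg]; simp only; rw [max_eq_left h, abs_of_nonneg h]; ring
    have : 2 * ∑ b, g b ≤ L := by
      rw [Finset.mul_sum]
      simp_rw [h2]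
      rw [Finset.sum_add_distrib, hBdiff0, add_zero]
      exact hBabs
    linarith
  -- pointwise bound on S
  have hpoint : ∀ x ∈ Finset.univ.filter
      (fun x : A × B => p x / pB x.2 > 2 * (q x / qB x.2)),
      p x ≤ 2 * (max (p x - q x) 0 + (q x / qB x.2) * g x.2) := by
    intro x hx
    rw [Finset.mem_filter] at hx
    have hx' := hx.2
    have hpb := hpB x.2
    have hqb := hqB x.2
    have h1 : 2 * (q x / qB x.2) * pB x.2 < p x := (lt_div_iff₀ hpb).mp hx'
    have h2 : p x ≤ 2 * (p x - q x * pB x.2 / qB x.2) := by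
      have : q x * pB x.2 / qB x.2 = 2 * (q x / qB x.2) * pB x.2 / 2 := by ring
      nlinarith
    have h3 : p x - q x * pB x.2 / qB x.2
        ≤ max (p x - q x) 0 + (q x / qB x.2) * g x.2 := by
      have key : p x - q x * pB x.2 / qB x.2
          = (p x - q x) + (q x / qB x.2) * (qB x.2 - pB x.2) := by
        have hne : qB x.2 ≠ 0 := hqb.ne'
        rw [mul_sub, div_mul_cancel₀ _ hne]; ring
      rw [key]
      have h4 : p x - q x ≤ max (p x - q x) 0 := le_max_left _ _
      have h5 : (q x / qB x.2) * (qB x.2 - pB x.2) ≤ (q x / qB x.2) * g x.2 :=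
        mul_le_mul_of_nonneg_left (le_max_left _ _) (div_nonneg (hq0 x) hqb.le)
      linarith
    linarith
  -- sum the cross term
  have hcross : ∑ x : A × B, (q x / qB x.2) * g x.2 = ∑ b, g b := by
    rw [hsplit (fun x => (q x / qB x.2) * g x.2)]
    refine Finset.sum_congr rfl fun b _ => ?_
    have : ∑ a, q (a, b) / qB b * g b = (∑ a, q (a, b)) / qB b * g b := by
      rw [Finset.sum_div, Finset.sum_mul]
    rw [this]
    rw [div_self (hqB b).ne', one_mul]
  -- assemble
  calc ∑ x ∈ Finset.univ.filter
        (fun x : A × B => p x / pB x.2 > 2 * (q x / qB x.2)), p x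
      ≤ ∑ x ∈ Finset.univ.filter
        (fun x : A × B => p x / pB x.2 > 2 * (q x / qB x.2)),
          2 * (max (p x - q x) 0 + (q x / qB x.2) * g x.2) :=
        Finset.sum_le_sum hpoint
    _ ≤ ∑ x : A × B, 2 * (max (p x - q x) 0 + (q x / qB x.2) * g x.2) := by
        refine Finset.sum_le_sum_of_subset_of_nonneg (Finset.filter_subset _ _)
          fun x _ _ => ?_
        have h1 : 0 ≤ max (p x - q x) 0 := le_max_right _ _
        have h2 : 0 ≤ (q x / qB x.2) * g x.2 :=
          mul_nonneg (div_nonneg (hq0 x) (hqB x.2).le) (le_max_right _ _)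
        linarith
    _ = 2 * (∑ x, max (p x - q x) 0 + ∑ x : A × B, (q x / qB x.2) * g x.2) := by
        rw [← Finset.mul_sum, Finset.sum_add_distrib]
    _ = 2 * (L / 2 + ∑ b, g b) := by rw [hA, hcross]
    _ ≤ 2 * (L / 2 + L / 2) := by linarith [hB]
    _ = 2 * L := by ring
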